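/- Let k be an algebraically closed field of characteristic zero and d, m ≥ 1. Let W̃ be a set of nonempty words of length at most m in the alphabet {1,…,d} containing exactly one representative of each cyclic-equivalence class of such words (no two distinct elements of W̃ are cyclic rotations of each other, and every nonempty word of length at most m is a cyclic rotation of some element of W̃). Then for every function a: W̃ → k there exist N ≥ 1 and matrices X_1,…,X_d ∈ Mat_N(k) such that tr(w(X_1,…,X_d)) = a(w) for every w ∈ W̃, where for a word w = w_1⋯w_l one sets w(X_1,…,X_d) := X_{w_1}⋯X_{w_l}. -/

import Mathlib

/-!
Statement 13:  Let `k` be an algebraically closed field of characteristic zero and `d, m ≥ 1`.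
Let `W̃` be a set of nonempty words of length at most `m` in the alphabet `{1,…,d}` containing
exactly one representative of each cyclic-equivalence class of such words.  Then for every
function `a : W̃ → k` there exist `N ≥ 1` and matrices `X_1, …, X_d ∈ Mat_N(k)` such that
`tr (w(X_1,…,X_d)) = a w` for every `w ∈ W̃`.

Words are modelled as lists over `Fin d`; a cyclic rotation is `List.rotate`; the evaluation of a
word `w` at matrices `X` is `((w.map X).prod)`.
-/

open Matrix
open Fin.NatCast

section Aux

variable {k : Type*} [Field k] {d : ℕ}

lemma prod_fromBlocks {N M : ℕ} (X : Fin d → Matrix (Fin N) (Fin N) k)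
    (Y : Fin d → Matrix (Fin M) (Fin M) k) (w : List (Fin d)) :
    ((w.map (fun i => Matrix.fromBlocks (X i) 0 0 (Y i))).prod)
      = Matrix.fromBlocks ((w.map X).prod) 0 0 ((w.map Y).prod) := by
  induction w with
  | nil => simp [Matrix.fromBlocks_one]
  | cons a w ih => simp [ih, Matrix.fromBlocks_multiply]

lemma trace_fromBlocks' {N M : ℕ} (A : Matrix (Fin N) (Fin N) k) (D : Matrix (Fin M) (Fin M) k) :
    Matrix.trace (Matrix.fromBlocks A (0 : Matrix (Fin N) (Fin M) k) 0 D)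
      = Matrix.trace A + Matrix.trace D := by
  simp [Matrix.trace, Matrix.diag, Fintype.sum_sum_type, Matrix.fromBlocks]

lemma trace_blockSum {N M : ℕ} (X : Fin d → Matrix (Fin N) (Fin N) k)
    (Y : Fin d → Matrix (Fin M) (Fin M) k) (w : List (Fin d)) :
    Matrix.trace ((w.map (fun i =>
        Matrix.reindex finSumFinEquiv finSumFinEquiv (Matrix.fromBlocks (X i) 0 0 (Y i)))).prod)
      = Matrix.trace ((w.map X).prod) + Matrix.trace ((w.map Y).prod) := by
  have h1 : (w.map (fun i =>
        Matrix.reindex finSumFinEquiv finSumFinEquiv (Matrix.fromBlocks (X i) 0 0 (Y i)))).prod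
      = Matrix.reindexAlgEquiv k k finSumFinEquiv
          ((w.map (fun i => Matrix.fromBlocks (X i) 0 0 (Y i))).prod) := by
    rw [map_list_prod (Matrix.reindexAlgEquiv k k finSumFinEquiv), List.map_map]
    rfl
  rw [h1, prod_fromBlocks]
  have h2 : ∀ (A : Matrix (Fin N ⊕ Fin M) (Fin N ⊕ Fin M) k),
      Matrix.trace (Matrix.reindexAlgEquiv k k finSumFinEquiv A) = Matrix.trace A := by
    intro A
    simp only [Matrix.reindexAlgEquiv_apply, Matrix.reindex_apply, Matrix.trace,
      Matrix.diag, Matrix.submatrix_apply]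
    exact Equiv.sum_comp finSumFinEquiv.symm (fun i => A i i)
  rw [h2, trace_fromBlocks']




lemma cycle_block (v : List (Fin d)) (hv : v ≠ []) (c : k) :
    ∃ X : Fin d → Matrix (Fin v.length) (Fin v.length) k,
      ∀ u : List (Fin d), u ≠ [] → u.length ≤ v.length →
        Matrix.trace ((u.map X).prod)
          = ((Finset.univ.filter (fun j : Fin v.length => u = v.rotate (j : ℕ))).card : k) * c := by
  classical
  have hl0 : v.length ≠ 0 := by simpa using hv
  haveI : NeZero v.length := ⟨hl0⟩
  set l := v.length with hldef
  set e : Fin l → k := fun j => if j = 0 then c else 1 with he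
  set X : Fin d → Matrix (Fin l) (Fin l) k :=
    fun i => Matrix.of (fun j j' => if j' = j + 1 ∧ v.get j = i then e j else 0) with hX
  refine ⟨X, ?_⟩
  have key : ∀ (u : List (Fin d)) (j j' : Fin l),
      ((u.map X).prod) j j' =
        if (j' = j + (u.length : Fin l) ∧
            ∀ t : ℕ, (h : t < u.length) → u.get ⟨t, h⟩ = v.get (j + (t : Fin l)))
        then (∏ t ∈ Finset.range u.length, e (j + (t : Fin l))) else 0 := by
    intro u
    induction u with
    | nil =>
      intro j j'
      simp [Matrix.one_apply, eq_comm]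
    | cons a u ih =>
      intro j j'
      have hstep : (((a :: u).map X).prod) j j'
          = (if v.get j = a then e j else 0) * ((u.map X).prod) (j + 1) j' := by
        rw [List.map_cons, List.prod_cons, Matrix.mul_apply]
        rw [Finset.sum_eq_single (j + 1)]
        · by_cases hj : v.get j = a <;> simp [hX, hj]
        · intro b _ hb
          simp [hX, hb, Ne.symm hb]
        · simp
      rw [hstep, ih]
      by_cases hj : v.get j = a
      · rw [if_pos hj]
        have hcast : (((a :: u).length : ℕ) : Fin l) = (u.length : Fin l) + 1 := by
          simp [Nat.cast_add]
        have hadd : ∀ t : ℕ, j + 1 + (t : Fin l) = j + ((t : Fin l) + 1) := by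
          intro t; abel
        have hiff : (j' = j + 1 + (u.length : Fin l) ∧
              ∀ t : ℕ, (h : t < u.length) → u.get ⟨t, h⟩ = v.get (j + 1 + (t : Fin l)))
            ↔ (j' = j + ((a :: u).length : Fin l) ∧
              ∀ t : ℕ, (h : t < (a :: u).length) →
                (a :: u).get ⟨t, h⟩ = v.get (j + (t : Fin l))) := by
          constructor
          · rintro ⟨h1, h2⟩
            refine ⟨by rw [hcast, h1]; abel, ?_⟩
            intro t ht
            match t with
            | 0 => simpa using hj.symm
            | (t+1) =>
              have ht' : t < u.length := by simpa using ht
              simpa [hadd t] using h2 t ht'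
          · rintro ⟨h1, h2⟩
            refine ⟨by rw [h1, hcast]; abel, ?_⟩
            intro t ht
            have := h2 (t + 1) (by simpa using Nat.succ_lt_succ ht)
            simpa [hadd t] using this
        have hprod : e j * ∏ t ∈ Finset.range u.length, e (j + 1 + (t : Fin l))
            = ∏ t ∈ Finset.range (a :: u).length, e (j + (t : Fin l)) := by
          rw [List.length_cons, Finset.prod_range_succ']
          simp only [hadd, Nat.cast_zero, add_zero]
          rw [mul_comm]
          congr 1
          apply Finset.prod_congr rfl
          intro t _
          congr 1
          push_cast
          ring
        rw [mul_ite, mul_zero, hprod]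
        simp only [hiff]
      · rw [if_neg hj, zero_mul, eq_comm, if_neg]
        rintro ⟨-, h2⟩
        have h0 := h2 0 (Nat.succ_pos _)
        simp at h0
        exact hj h0.symm
  intro u hu hlen
  have hT : Matrix.trace ((u.map X).prod)
      = ∑ j : Fin l, (if (j = j + (u.length : Fin l) ∧
          ∀ t : ℕ, (h : t < u.length) → u.get ⟨t, h⟩ = v.get (j + (t : Fin l)))
        then (∏ t ∈ Finset.range u.length, e (j + (t : Fin l))) else 0) := by
    simp only [Matrix.trace, Matrix.diag]
    exact Finset.sum_congr rfl (fun j _ => key u j j)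
  by_cases hcase : u.length = l
  · -- length equals l
    have hfin : ∀ (j : Fin l) (t : ℕ), t < l →
        ∀ (h2 : (t + (j : ℕ)) % v.length < v.length),
        (⟨(t + (j : ℕ)) % v.length, h2⟩ : Fin v.length) = j + (t : Fin l) := by
      intro j t _ h2
      apply Fin.ext
      rw [Fin.add_def, Fin.val_natCast]
      show (t + (j : ℕ)) % l = ((j : ℕ) + t % l) % l
      rw [Nat.add_mod_mod, Nat.add_comm]
    have hmatch : ∀ j : Fin l,
        ((∀ t : ℕ, (h : t < u.length) → u.get ⟨t, h⟩ = v.get (j + (t : Fin l)))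
          ↔ u = v.rotate (j : ℕ)) := by
      intro j
      constructor
      · intro H
        apply List.ext_get (by simp [hcase, hldef])
        intro t h1 h2
        have h1' : t < l := by rwa [hcase] at h1
        rw [List.get_rotate]
        rw [hfin j t h1']
        exact H t h1
      · intro H t h
        have h' : t < l := by rwa [hcase] at h
        rw [List.get_of_eq H, List.get_rotate]
        exact congrArg v.get (hfin j t h' _)
    have hwt : ∀ j : Fin l, ∏ t ∈ Finset.range u.length, e (j + (t : Fin l)) = c := by
      intro j
      rw [hcase]
      have h1 : ∏ t ∈ Finset.range l, e (j + (t : Fin l)) = ∏ x : Fin l, e (j + x) := by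
        rw [← Fin.prod_univ_eq_prod_range (fun t : ℕ => e (j + (t : Fin l)))]
        exact Finset.prod_congr rfl (fun x _ => by rw [Fin.cast_val_eq_self])
      have h2 : ∏ x : Fin l, e (j + x) = ∏ x : Fin l, e x :=
        Equiv.prod_comp (Equiv.addLeft j) e
      rw [h1, h2]
      simp [he, Finset.prod_ite_eq']
    have hz : ((u.length : ℕ) : Fin l) = 0 := by rw [hcase]; exact Fin.natCast_self l
    rw [hT]
    have hterm : ∀ j : Fin l,
        (if (j = j + (u.length : Fin l) ∧
            ∀ t : ℕ, (h : t < u.length) → u.get ⟨t, h⟩ = v.get (j + (t : Fin l)))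
          then (∏ t ∈ Finset.range u.length, e (j + (t : Fin l))) else 0)
        = if u = v.rotate (j : ℕ) then c else 0 := by
      intro j
      rw [hwt j]
      simp only [hz, add_zero, true_and, hmatch j]
    rw [Finset.sum_congr rfl (fun j _ => hterm j)]
    rw [Finset.sum_ite, Finset.sum_const, Finset.sum_const_zero, add_zero, nsmul_eq_mul]
  · -- length strictly less than l
    have hlt : u.length < l := lt_of_le_of_ne hlen hcase
    have hpos : 0 < u.length := List.length_pos_iff.mpr hu
    have h0 : ((u.length : ℕ) : Fin l) ≠ 0 := by
      intro hdvd
      rw [Fin.natCast_eq_zero] at hdvd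
      exact absurd (Nat.le_of_dvd hpos hdvd) (not_le.mpr hlt)
    have hne : ∀ j : Fin l, ¬ (j = j + (u.length : Fin l) ∧
        ∀ t : ℕ, (h : t < u.length) → u.get ⟨t, h⟩ = v.get (j + (t : Fin l))) := by
      rintro j ⟨h1, -⟩
      exact h0 ((left_eq_add).mp h1)
    have hempty : (Finset.univ.filter (fun j : Fin l => u = v.rotate (j : ℕ))) = ∅ := by
      rw [Finset.filter_eq_empty_iff]
      intro j _ hj
      apply hcase
      rw [hj]
      simp [hldef]
    rw [hT, Finset.sum_congr rfl (fun j _ => if_neg (hne j)), hempty]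
    simp

lemma main_realize [CharZero k] (F : Finset (List (Fin d)))
    (h1 : ∀ w ∈ F, w ≠ [])
    (h2 : ∀ w₁ ∈ F, ∀ w₂ ∈ F, (∃ r : ℕ, w₂ = w₁.rotate r) → w₁ = w₂)
    (a : List (Fin d) → k) :
    ∃ N : ℕ, 1 ≤ N ∧ ∃ X : Fin d → Matrix (Fin N) (Fin N) k,
      ∀ w ∈ F, Matrix.trace ((w.map X).prod) = a w := by
  classical
  revert h1 h2
  induction F using Finset.strongInduction with
  | _ F ih =>
    intro h1 h2
    rcases F.eq_empty_or_nonempty with rfl | hne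
    · exact ⟨1, le_refl 1, fun _ => 0, by simp⟩
    obtain ⟨w, hwF, hmax⟩ := F.exists_max_image (fun u => u.length) hne
    obtain ⟨N, hN1, X, hX⟩ := ih (F.erase w) (Finset.erase_ssubset hwF)
      (fun u hu => h1 u (Finset.mem_of_mem_erase hu))
      (fun u hu u' hu' => h2 u (Finset.mem_of_mem_erase hu) u' (Finset.mem_of_mem_erase hu'))
    have hwne : w ≠ [] := h1 w hwF
    haveI : NeZero w.length := ⟨by simpa using hwne⟩
    set p := (Finset.univ.filter (fun j : Fin w.length => w = w.rotate (j : ℕ))).card with hp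
    have hppos : 0 < p := by
      apply Finset.card_pos.mpr
      refine ⟨0, Finset.mem_filter.mpr ⟨Finset.mem_univ _, ?_⟩⟩
      simp
    have hpk : (p : k) ≠ 0 := Nat.cast_ne_zero.mpr hppos.ne'
    obtain ⟨Y, hY⟩ := cycle_block w hwne ((a w - Matrix.trace ((w.map X).prod)) / p)
    refine ⟨N + w.length, le_trans hN1 (Nat.le_add_right _ _),
      fun i => Matrix.reindex finSumFinEquiv finSumFinEquiv (Matrix.fromBlocks (X i) 0 0 (Y i)), ?_⟩
    intro u huF
    rw [trace_blockSum]
    by_cases hu : u = w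
    · subst hu
      rw [hY u hwne le_rfl, ← hp]
      field_simp
      ring
    · have huE : u ∈ F.erase w := Finset.mem_erase.mpr ⟨hu, huF⟩
      rw [hX u huE, hY u (h1 u huF) (hmax u huF)]
      have hempty : (Finset.univ.filter (fun j : Fin w.length => u = w.rotate (j : ℕ))) = ∅ := by
        rw [Finset.filter_eq_empty_iff]
        intro j _ hj
        exact hu (h2 w hwF u huF ⟨j, hj⟩).symm
      rw [hempty]
      simp



end Aux

theorem trace_values_realizable
    (k : Type*) [Field k] [IsAlgClosed k] [CharZero k]
    (d m : ℕ) (hd : 1 ≤ d) (hm : 1 ≤ m)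
    (W : Set (List (Fin d)))
    -- every element of `W` is a nonempty word of length at most `m`
    (hW : ∀ w ∈ W, w ≠ [] ∧ w.length ≤ m)
    -- no two distinct elements of `W` are cyclic rotations of each other
    (hrep : ∀ w₁ ∈ W, ∀ w₂ ∈ W, (∃ r : ℕ, w₂ = w₁.rotate r) → w₁ = w₂)
    -- every nonempty word of length at most `m` is a cyclic rotation of some element of `W`
    (hfull : ∀ w : List (Fin d), w ≠ [] → w.length ≤ m → ∃ v ∈ W, ∃ r : ℕ, w = v.rotate r)
    (a : List (Fin d) → k) :
    ∃ (N : ℕ), 1 ≤ N ∧ ∃ X : Fin d → Matrix (Fin N) (Fin N) k,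
      ∀ w ∈ W, Matrix.trace ((w.map X).prod) = a w := by
  have hfin : W.Finite := Set.Finite.subset (List.finite_length_le (Fin d) m)
    (fun w hw => (hW w hw).2)
  obtain ⟨N, hN, X, hX⟩ := main_realize hfin.toFinset
    (fun w hw => (hW w (hfin.mem_toFinset.mp hw)).1)
    (fun w₁ h₁ w₂ h₂ => hrep w₁ (hfin.mem_toFinset.mp h₁) w₂ (hfin.mem_toFinset.mp h₂)) a
  exact ⟨N, hN, X, fun w hw => hX w (hfin.mem_toFinset.mpr hw)⟩
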